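/- Let n ≥ 2 and let μ be a positive integer with μ mod 9 ∈ {2, 5}. Define f : ZMod(3^n) → ZMod(3^n) by f(x) = μ·x·(x+1). Then the maximum over all x₀ ∈ ZMod(3^n) of the minimal period of x₀ under f equals 2·3^{n−2}. -/

import Mathlib

namespace Logi

/-- The integer logistic map. -/
def FF (m z : ℤ) : ℤ := m * z * (z + 1)

/-- The difference cocycle along two orbits. -/
def QQ (m a b : ℤ) (L : ℕ) : ℤ :=
  ∏ i ∈ Finset.range L, (m * ((FF m)^[i] a + (FF m)^[i] b + 1))

lemma iter_sub (m a b : ℤ) (L : ℕ) :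
    (FF m)^[L] a - (FF m)^[L] b = (a - b) * QQ m a b L := by
  induction L with
  | zero => simp [QQ]
  | succ L ih =>
    rw [Function.iterate_succ_apply', Function.iterate_succ_apply']
    have h : ∀ A B : ℤ, FF m A - FF m B = (A - B) * (m * (A + B + 1)) := by
      intro A B; simp only [FF]; ring
    rw [h, ih]
    simp only [QQ, Finset.prod_range_succ]
    ring

lemma iter_dvd (M m a b : ℤ) (L : ℕ) (h : M ∣ a - b) :
    M ∣ (FF m)^[L] a - (FF m)^[L] b := by
  rw [iter_sub]; exact h.mul_right _

lemma ball0 (m z : ℤ) (h : (3:ℤ) ∣ z) : (3:ℤ) ∣ FF m z := by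
  obtain ⟨t, rfl⟩ := h
  exact ⟨m * t * (3 * t + 1), by simp [FF]; ring⟩

lemma ball0_iter (m z : ℤ) (L : ℕ) (h : (3:ℤ) ∣ z) : (3:ℤ) ∣ (FF m)^[L] z := by
  induction L with
  | zero => simpa
  | succ L ih => rw [Function.iterate_succ_apply']; exact ball0 m _ ih

lemma Q_congr (M m a a' b b' : ℤ) (L : ℕ) (ha : M ∣ a - a') (hb : M ∣ b - b') :
    M ∣ QQ m a b L - QQ m a' b' L := by
  induction L with
  | zero => simp [QQ]
  | succ L ih =>
    rw [QQ, QQ, Finset.prod_range_succ, Finset.prod_range_succ, ← QQ, ← QQ]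
    have hf : M ∣ (m * ((FF m)^[L] a + (FF m)^[L] b + 1))
        - (m * ((FF m)^[L] a' + (FF m)^[L] b' + 1)) := by
      have h1 := iter_dvd M m a a' L ha
      have h2 := iter_dvd M m b b' L hb
      have : (m * ((FF m)^[L] a + (FF m)^[L] b + 1))
          - (m * ((FF m)^[L] a' + (FF m)^[L] b' + 1))
          = m * (((FF m)^[L] a - (FF m)^[L] a') + ((FF m)^[L] b - (FF m)^[L] b')) := by ring
      rw [this]
      exact Dvd.dvd.mul_left (dvd_add h1 h2) m
    have key : QQ m a b L * (m * ((FF m)^[L] a + (FF m)^[L] b + 1))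
        - QQ m a' b' L * (m * ((FF m)^[L] a' + (FF m)^[L] b' + 1))
        = QQ m a b L * ((m * ((FF m)^[L] a + (FF m)^[L] b + 1))
            - (m * ((FF m)^[L] a' + (FF m)^[L] b' + 1)))
          + (QQ m a b L - QQ m a' b' L) * (m * ((FF m)^[L] a' + (FF m)^[L] b' + 1)) := by
      ring
    rw [key]
    exact dvd_add (hf.mul_left _) (ih.mul_right _)

lemma Q_mod3 (m a b : ℤ) (L : ℕ) (ha : (3:ℤ) ∣ a) (hb : (3:ℤ) ∣ b) :
    (3:ℤ) ∣ QQ m a b L - m ^ L := by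
  induction L with
  | zero => simp [QQ]
  | succ L ih =>
    rw [QQ, Finset.prod_range_succ, ← QQ]
    have hf : (3:ℤ) ∣ (m * ((FF m)^[L] a + (FF m)^[L] b + 1)) - m := by
      obtain ⟨u, hu⟩ := ball0_iter m a L ha
      obtain ⟨v, hv⟩ := ball0_iter m b L hb
      exact ⟨m * (u + v), by rw [hu, hv]; ring⟩
    have key : QQ m a b L * (m * ((FF m)^[L] a + (FF m)^[L] b + 1)) - m ^ (L+1)
        = QQ m a b L * ((m * ((FF m)^[L] a + (FF m)^[L] b + 1)) - m)
          + (QQ m a b L - m ^ L) * m := by ring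
    rw [key]
    exact dvd_add (hf.mul_left _) (ih.mul_right _)


lemma step (m x : ℤ) (L : ℕ) (h3x : (3:ℤ) ∣ x) (hL : (3:ℤ) ∣ m ^ L - 1)
    (h9 : (9:ℤ) ∣ (FF m)^[L] x - x) :
    ∃ u : ℤ, (FF m)^[L * 3] x - x = ((FF m)^[L] x - x) * (3 * u) ∧ ¬ (3:ℤ) ∣ u := by
  set g := (FF m)^[L] with hg
  have hit : (FF m)^[L * 3] x = g (g (g x)) := by
    rw [Function.iterate_mul]
    simp [Function.iterate_succ_apply']
    rfl
  have e1 : g (g x) - g x = (g x - x) * QQ m (g x) x L := iter_sub m (g x) x L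
  have e2 : g (g (g x)) - g (g x) = (g (g x) - g x) * QQ m (g (g x)) (g x) L :=
    iter_sub m (g (g x)) (g x) L
  set Q1 := QQ m (g x) x L with hQ1
  set Q2 := QQ m (g (g x)) (g x) L with hQ2
  -- Q1 ≡ 1 mod 3
  have h3gx : (3:ℤ) ∣ g x := ball0_iter m x L h3x
  have hq1 : (3:ℤ) ∣ Q1 - 1 := by
    have := Q_mod3 m (g x) x L h3gx h3x
    have e : Q1 - 1 = (Q1 - m ^ L) + (m ^ L - 1) := by ring
    rw [e]; exact dvd_add this hL
  -- Q2 ≡ Q1 mod 9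
  have hq21 : (9:ℤ) ∣ Q2 - Q1 := by
    apply Q_congr 9 m (g (g x)) (g x) (g x) x L
    · rw [e1]; exact (h9.mul_right _)
    · exact h9
  obtain ⟨a, haa⟩ := hq1
  obtain ⟨b, hbb⟩ := hq21
  have hQ1e : Q1 = 1 + 3 * a := by linarith
  have hQ2e : Q2 = 1 + 3 * a + 9 * b := by linarith
  refine ⟨1 + 3 * (a + a * a + b + 3 * a * b), ?_, ?_⟩
  · have sum : (FF m)^[L * 3] x - x
        = (g x - x) + (g (g x) - g x) + (g (g (g x)) - g (g x)) := by
      rw [hit]; ring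
    rw [sum, e2, e1, hQ1e, hQ2e]
    ring
  · intro ⟨w, hw⟩; omega

lemma upperA (m : ℤ) (hm : m % 3 = 2) (k : ℕ) (hk : 1 ≤ k) (x : ℤ) (h3x : (3:ℤ) ∣ x) :
    (3:ℤ) ^ (k + 1) ∣ (FF m)^[2 * 3 ^ (k - 1)] x - x := by
  have hm2 : (3:ℤ) ∣ m ^ 2 - 1 := by
    obtain ⟨s, rfl⟩ : ∃ s, m = 3 * s + 2 := ⟨m / 3, by omega⟩
    exact ⟨3 * s ^ 2 + 4 * s + 1, by ring⟩
  have hmL : ∀ L : ℕ, (3:ℤ) ∣ m ^ (2 * 3 ^ L) - 1 := by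
    intro L
    rw [pow_mul]
    calc (3:ℤ) ∣ m ^ 2 - 1 := hm2
    _ ∣ (m ^ 2) ^ 3 ^ L - 1 ^ 3 ^ L := sub_dvd_pow_sub_pow _ _ _
    _ = (m ^ 2) ^ 3 ^ L - 1 := by rw [one_pow]
  induction k with
  | zero => omega
  | succ k ih =>
    rcases Nat.eq_or_lt_of_le hk with h1 | h1
    · -- base case k+1 = 1, i.e. k = 0
      have hk0 : k = 0 := by omega
      subst hk0
      obtain ⟨s, rfl⟩ : ∃ s, m = 3 * s + 2 := ⟨m / 3, by omega⟩
      obtain ⟨t, rfl⟩ := h3x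
      simp only [show (1:ℕ) - 1 = 0 from rfl, pow_zero, mul_one]
      refine ⟨t + 12*t^2 + 48*t^3 + 72*t^4 + 4*s*t + 48*s*t^2 + 216*s*t^3 + 324*s*t^4
        + 3*s^2*t + 63*s^2*t^2 + 324*s^2*t^3 + 486*s^2*t^4 + 27*s^3*t^2 + 162*s^3*t^3
        + 243*s^3*t^4, ?_⟩
      show (FF (3*s+2)) ((FF (3*s+2)) (3*t)) - 3*t = _
      simp only [FF]
      ring
    · -- inductive step: 1 ≤ k
      have hk1 : 1 ≤ k := by omega
      have ihh := ih hk1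
      have h9 : (9:ℤ) ∣ (FF m)^[2 * 3 ^ (k - 1)] x - x := by
        refine dvd_trans ?_ ihh
        have : (9:ℤ) = 3 ^ 2 := by norm_num
        rw [this]
        exact pow_dvd_pow 3 (by omega)
      obtain ⟨u, hu, _⟩ := step m x (2 * 3 ^ (k - 1)) h3x (by
        have := hmL (k-1); rwa [mul_comm 2 (3 ^ (k-1))] at this ⊢) h9
      have hexp : 2 * 3 ^ (k + 1 - 1) = 2 * 3 ^ (k - 1) * 3 := by
        have : k + 1 - 1 = (k - 1) + 1 := by omega
        rw [this, pow_succ]; ring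
      rw [hexp, hu]
      obtain ⟨c, hc⟩ := ihh
      rw [hc]
      exact ⟨c * u, by rw [pow_succ]; ring⟩


lemma exactE (m : ℤ) (hm9 : m % 9 = 2 ∨ m % 9 = 5) (k : ℕ) (hk : 1 ≤ k) :
    ∃ c : ℤ, (FF m)^[2 * 3 ^ (k - 1)] 3 - 3 = 3 ^ (k + 1) * c ∧ ¬ (3:ℤ) ∣ c := by
  have hm : m % 3 = 2 := by omega
  have hm2 : (3:ℤ) ∣ m ^ 2 - 1 := by
    obtain ⟨s, rfl⟩ : ∃ s, m = 3 * s + 2 := ⟨m / 3, by omega⟩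
    exact ⟨3 * s ^ 2 + 4 * s + 1, by ring⟩
  have hmL : ∀ L : ℕ, (3:ℤ) ∣ m ^ (3 ^ L * 2) - 1 := by
    intro L
    rw [mul_comm, pow_mul]
    calc (3:ℤ) ∣ m ^ 2 - 1 := hm2
    _ ∣ (m ^ 2) ^ 3 ^ L - 1 ^ 3 ^ L := sub_dvd_pow_sub_pow _ _ _
    _ = (m ^ 2) ^ 3 ^ L - 1 := by rw [one_pow]
  induction k with
  | zero => omega
  | succ k ih =>
    rcases Nat.eq_or_lt_of_le hk with h1 | h1
    · -- base case: k = 0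
      have hk0 : k = 0 := by omega
      subst hk0
      simp only [show (1:ℕ) - 1 = 0 from rfl, pow_zero, mul_one]
      rcases hm9 with h | h
      · obtain ⟨q, rfl⟩ : ∃ q, m = 9 * q + 2 := ⟨m / 9, by omega⟩
        refine ⟨11664*q^3 + 7884*q^2 + 1776*q + 133, ?_, by intro ⟨w, hw⟩; omega⟩
        show (FF (9*q+2)) ((FF (9*q+2)) 3) - 3 = _
        simp only [FF]; ring
      · obtain ⟨q, rfl⟩ : ∃ q, m = 9 * q + 5 := ⟨m / 9, by omega⟩
        refine ⟨11664*q^3 + 19548*q^2 + 10920*q + 2033, ?_, by intro ⟨w, hw⟩; omega⟩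
        show (FF (9*q+5)) ((FF (9*q+5)) 3) - 3 = _
        simp only [FF]; ring
    · -- step
      have hk1 : 1 ≤ k := by omega
      obtain ⟨c, hc, hc3⟩ := ih hk1
      have h9 : (9:ℤ) ∣ (FF m)^[2 * 3 ^ (k - 1)] 3 - 3 := by
        rw [hc]
        refine Dvd.dvd.mul_right ?_ c
        have : (9:ℤ) = 3 ^ 2 := by norm_num
        rw [this]; exact pow_dvd_pow 3 (by omega)
      obtain ⟨u, hu, hu3⟩ := step m 3 (2 * 3 ^ (k - 1)) ⟨1, by ring⟩ (by
        have := hmL (k-1); rwa [mul_comm (3 ^ (k-1)) 2] at this) h9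
      have hexp : 2 * 3 ^ (k + 1 - 1) = 2 * 3 ^ (k - 1) * 3 := by
        have : k + 1 - 1 = (k - 1) + 1 := by omega
        rw [this, pow_succ]; ring
      refine ⟨c * u, ?_, ?_⟩
      · rw [hexp, hu, hc, pow_succ]; ring
      · intro h
        rcases (Int.Prime.dvd_mul' (by norm_num) h) with h' | h'
        · exact hc3 h'
        · exact hu3 h'


lemma ball1 (m z : ℤ) (hm : m % 3 = 2) (h : (3:ℤ) ∣ z - 1) : (3:ℤ) ∣ FF m z - 1 := by
  obtain ⟨s, rfl⟩ : ∃ s, m = 3 * s + 2 := ⟨m / 3, by omega⟩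
  obtain ⟨w, hw⟩ := h
  have hz : z = 3 * w + 1 := by omega
  subst hz
  exact ⟨1 + 6*w + 6*w^2 + 2*s + 9*s*w + 9*s*w^2, by simp only [FF]; ring⟩

lemma ball1_iter (m z : ℤ) (hm : m % 3 = 2) (L : ℕ) (h : (3:ℤ) ∣ z - 1) :
    (3:ℤ) ∣ (FF m)^[L] z - 1 := by
  induction L with
  | zero => simpa
  | succ L ih => rw [Function.iterate_succ_apply']; exact ball1 m _ hm ih

lemma contraction (m : ℤ) (hm : m % 3 = 2) (a b : ℤ) (ha : (3:ℤ) ∣ a - 1)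
    (hb : (3:ℤ) ∣ b - 1) (j : ℕ) : (3:ℤ) ^ j ∣ (FF m)^[j] a - (FF m)^[j] b := by
  induction j with
  | zero => simp
  | succ j ih =>
    rw [Function.iterate_succ_apply', Function.iterate_succ_apply']
    set A := (FF m)^[j] a
    set B := (FF m)^[j] b
    have hsum : (3:ℤ) ∣ m * (A + B + 1) := by
      obtain ⟨u, hu⟩ := ball1_iter m a hm j ha
      obtain ⟨v, hv⟩ := ball1_iter m b hm j hb
      exact Dvd.dvd.mul_left ⟨u + v + 1, by omega⟩ m
    have hdiff : FF m A - FF m B = (A - B) * (m * (A + B + 1)) := by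
      simp only [FF]; ring
    rw [hdiff, pow_succ]
    exact mul_dvd_mul ih hsum

lemma pow9 (m : ℤ) (M : ℕ) : (9:ℤ) ∣ (FF m)^[M] 3 - 3 * m ^ M := by
  induction M with
  | zero => simp
  | succ M ih =>
    obtain ⟨s, hs⟩ := ih
    have hval : (FF m)^[M] 3 = 3 * m ^ M + 9 * s := by omega
    rw [Function.iterate_succ_apply', hval]
    exact ⟨m * ((m ^ M) ^ 2 + 6 * (m ^ M) * s + 9 * s ^ 2 + s), by
      simp only [FF]; ring⟩

section glue

variable (n : ℕ) (μ : ℕ)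

/-- The logistic map on `ZMod (3^n)`. -/
def ff : ZMod (3 ^ n) → ZMod (3 ^ n) := fun x => (μ : ZMod (3 ^ n)) * x * (x + 1)

lemma cast_iter (L : ℕ) (z : ℤ) :
    (((FF (μ : ℤ))^[L] z : ℤ) : ZMod (3 ^ n)) = (ff n μ)^[L] ((z : ℤ) : ZMod (3 ^ n)) := by
  induction L with
  | zero => simp
  | succ L ih =>
    rw [Function.iterate_succ_apply', Function.iterate_succ_apply', ← ih]
    show _ = ff n μ _
    simp only [ff, FF]
    push_cast
    ring

lemma cast_eq_iff (z w : ℤ) :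
    ((z : ZMod (3 ^ n)) = (w : ZMod (3 ^ n))) ↔ (3:ℤ) ^ n ∣ z - w := by
  rw [ZMod.intCast_eq_intCast_iff, Int.modEq_iff_dvd, dvd_sub_comm]
  constructor <;> intro h <;> exact_mod_cast h

end glue


section main

variable {n : ℕ} {μ : ℕ}

lemma keyA (hn : 2 ≤ n) (hm : (μ:ℤ) % 3 = 2) (z : ℤ) (h3 : (3:ℤ) ∣ z) :
    (ff n μ)^[2 * 3 ^ (n - 2)] ((z : ℤ) : ZMod (3 ^ n)) = ((z : ℤ) : ZMod (3 ^ n)) := by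
  have h := upperA (μ:ℤ) hm (n - 1) (by omega) z h3
  have e1 : n - 1 - 1 = n - 2 := by omega
  have e2 : n - 1 + 1 = n := by omega
  rw [e1, e2] at h
  rw [← cast_iter, cast_eq_iff]
  exact h

lemma upper_bound (hn : 2 ≤ n) (hm : (μ:ℤ) % 3 = 2) (x : ZMod (3 ^ n)) :
    Function.minimalPeriod (ff n μ) x ≤ 2 * 3 ^ (n - 2) := by
  haveI : NeZero (3 ^ n) := ⟨pow_ne_zero n (by norm_num)⟩
  set T := 2 * 3 ^ (n - 2) with hT
  have hTpos : 0 < T := by positivity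
  set z : ℤ := (x.val : ℤ) with hzdef
  have hzx : ((z : ℤ) : ZMod (3 ^ n)) = x := by
    rw [hzdef]; push_cast; exact ZMod.natCast_rightInverse x
  have htri : z % 3 = 0 ∨ z % 3 = 1 ∨ z % 3 = 2 := by omega
  rcases htri with h0 | h1 | h2
  · -- the 0-ball
    have h3 : (3:ℤ) ∣ z := by omega
    have hper : Function.IsPeriodicPt (ff n μ) T x := by
      show (ff n μ)^[T] x = x
      rw [← hzx]
      exact keyA hn hm z h3
    exact Nat.le_of_dvd hTpos hper.minimalPeriod_dvd
  · -- the 1-ball: fixed or not periodic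
    rcases Nat.eq_zero_or_pos (Function.minimalPeriod (ff n μ) x) with hL | hL
    · omega
    · set L := Function.minimalPeriod (ff n μ) x with hLdef
      have hper : Function.IsPeriodicPt (ff n μ) L x :=
        Function.isPeriodicPt_minimalPeriod _ _
      have hpern : Function.IsPeriodicPt (ff n μ) (L * n) x := hper.mul_const n
      have h31 : (3:ℤ) ∣ z - 1 := by omega
      set w : ℤ := FF (μ:ℤ) z with hwdef
      have h3w : (3:ℤ) ∣ w - 1 := ball1 _ _ hm h31
      have hcontr : (3:ℤ) ^ n ∣ (FF (μ:ℤ))^[L * n] z - (FF (μ:ℤ))^[L * n] w := by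
        refine dvd_trans (pow_dvd_pow 3 ?_) (contraction (μ:ℤ) hm z w h31 h3w (L * n))
        calc n = 1 * n := (one_mul n).symm
        _ ≤ L * n := Nat.mul_le_mul_right n hL
      have heq : (ff n μ)^[L * n] x = (ff n μ)^[L * n] (((w : ℤ) : ZMod (3 ^ n))) := by
        rw [← hzx, ← cast_iter, ← cast_iter, cast_eq_iff]
        exact hcontr
      have hwx : ((w : ℤ) : ZMod (3 ^ n)) = ff n μ x := by
        rw [← hzx]
        have := cast_iter n μ 1 z
        simpa using this
      have hfix : ff n μ x = x := by
        have lhs : (ff n μ)^[L * n] x = x := hpern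
        have rhs : (ff n μ)^[L * n] (ff n μ x) = ff n μ x := by
          rw [← Function.iterate_succ_apply, Function.iterate_succ_apply', lhs]
        rw [hwx, rhs] at heq
        rw [← heq]
        exact lhs
      have hper1 : Function.IsPeriodicPt (ff n μ) 1 x := by
        show (ff n μ)^[1] x = x
        simpa using hfix
      have := Nat.le_of_dvd (by norm_num) hper1.minimalPeriod_dvd
      omega
  · -- the 2-ball: not periodic
    rcases Nat.eq_zero_or_pos (Function.minimalPeriod (ff n μ) x) with hL | hL
    · omega
    · exfalso
      set L := Function.minimalPeriod (ff n μ) x with hLdef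
      have hper : Function.IsPeriodicPt (ff n μ) L x :=
        Function.isPeriodicPt_minimalPeriod _ _
      have h3Fz : (3:ℤ) ∣ FF (μ:ℤ) z := by
        obtain ⟨t, ht⟩ : (3:ℤ) ∣ z + 1 := by omega
        exact ⟨(μ:ℤ) * z * t, by simp only [FF]; rw [ht]; ring⟩
      have h3FL : (3:ℤ) ∣ (FF (μ:ℤ))^[L] z := by
        have : L = (L - 1) + 1 := by omega
        rw [this, Function.iterate_succ_apply]
        exact ball0_iter _ _ _ h3Fz
      have hcast : (3:ℤ) ^ n ∣ (FF (μ:ℤ))^[L] z - z := by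
        rw [← cast_eq_iff, cast_iter, hzx]
        exact hper
      have h3n : (3:ℤ) ∣ (3:ℤ) ^ n := dvd_pow_self 3 (by omega)
      have : (3:ℤ) ∣ z := (dvd_sub_right h3FL).mp ((dvd_trans h3n hcast))
      omega

lemma lower_exact (hn : 2 ≤ n) (hm9 : (μ:ℤ) % 9 = 2 ∨ (μ:ℤ) % 9 = 5) :
    Function.minimalPeriod (ff n μ) (((3 : ℤ) : ZMod (3 ^ n))) = 2 * 3 ^ (n - 2) := by
  have hm : (μ:ℤ) % 3 = 2 := by omega
  set T := 2 * 3 ^ (n - 2) with hTdef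
  have hTpos : 0 < T := by positivity
  set x3 : ZMod (3 ^ n) := ((3 : ℤ) : ZMod (3 ^ n)) with hx3
  have hperT : Function.IsPeriodicPt (ff n μ) T x3 := keyA hn hm 3 ⟨1, by ring⟩
  set L := Function.minimalPeriod (ff n μ) x3 with hLdef
  have hLpos : 0 < L := hperT.minimalPeriod_pos hTpos
  have hLdvd : L ∣ T := hperT.minimalPeriod_dvd
  by_contra hne
  obtain ⟨d, hd⟩ := hLdvd
  have hd1 : d ≠ 1 := by
    intro h; rw [h, mul_one] at hd; exact hne hd.symm
  obtain ⟨p, hp, hpd⟩ := Nat.exists_prime_and_dvd hd1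
  obtain ⟨e, he⟩ := hpd
  have hpT : p ∣ T := hd ▸ Dvd.dvd.mul_left (Dvd.intro e he.symm) L
  have hp23 : p = 2 ∨ p = 3 := by
    rcases (Nat.Prime.dvd_mul hp).mp (hTdef ▸ hpT) with h | h
    · left
      have := Nat.le_of_dvd (by norm_num) h
      have := hp.two_le
      omega
    · right
      have h3 := hp.dvd_of_dvd_pow h
      rcases (Nat.prime_three.eq_one_or_self_of_dvd p h3) with h' | h'
      · exact absurd h' hp.one_lt.ne'
      · exact h'
  rcases hp23 with rfl | rfl
  · -- L divides T/2 = 3^(n-2); contradiction mod 9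
    have hLd : L * e = 3 ^ (n - 2) := by
      have h2 : 2 * 3 ^ (n - 2) = 2 * (L * e) := by rw [hTdef] at hd; rw [hd, he]; ring
      exact (Nat.eq_of_mul_eq_mul_left (by norm_num) h2).symm
    have hperM : Function.IsPeriodicPt (ff n μ) (3 ^ (n - 2)) x3 := by
      rw [← hLd]
      exact (Function.isPeriodicPt_minimalPeriod _ _).mul_const e
    have hdvd : (3:ℤ) ^ n ∣ (FF (μ:ℤ))^[3 ^ (n - 2)] 3 - 3 := by
      rw [← cast_eq_iff, cast_iter]
      exact hperM
    have h9 : (9:ℤ) ∣ (FF (μ:ℤ))^[3 ^ (n - 2)] 3 - 3 := by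
      refine dvd_trans ?_ hdvd
      calc (9:ℤ) = 3 ^ 2 := by norm_num
      _ ∣ 3 ^ n := pow_dvd_pow 3 hn
    have h9' := pow9 (μ:ℤ) (3 ^ (n - 2))
    have h9'' : (9:ℤ) ∣ 3 * ((μ:ℤ) ^ 3 ^ (n - 2) - 1) := by
      have : 3 * ((μ:ℤ) ^ 3 ^ (n - 2) - 1)
          = ((FF (μ:ℤ))^[3 ^ (n - 2)] 3 - 3) - ((FF (μ:ℤ))^[3 ^ (n - 2)] 3 - 3 * (μ:ℤ) ^ 3 ^ (n - 2)) := by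
        ring
      rw [this]
      exact dvd_sub h9 h9'
    obtain ⟨c, hc⟩ := h9''
    have h3c : (3:ℤ) ∣ (μ:ℤ) ^ 3 ^ (n - 2) - 1 := ⟨c, by omega⟩
    have hodd : Odd (3 ^ (n - 2)) := Odd.pow ⟨1, by norm_num⟩
    have hdvd1 : (3:ℤ) ∣ (μ:ℤ) ^ 3 ^ (n - 2) + 1 := by
      have h1 : ((μ:ℤ) - (-1)) ∣ ((μ:ℤ) ^ 3 ^ (n - 2) - (-1) ^ 3 ^ (n - 2)) :=
        sub_dvd_pow_sub_pow _ _ _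
      rw [hodd.neg_one_pow] at h1
      have h2 : (3:ℤ) ∣ (μ:ℤ) - (-1) := ⟨(μ:ℤ) / 3 + 1, by omega⟩
      have := dvd_trans h2 h1
      simpa [sub_neg_eq_add] using this
    omega
  · -- L divides T/3 = 2·3^(n-3); contradiction by exactness
    have hn3 : 3 ≤ n := by
      by_contra h
      have hn2 : n = 2 := by omega
      rw [hTdef, hn2] at hpT
      norm_num at hpT
    have hLd : L * e = 2 * 3 ^ (n - 3) := by
      have h1 : 2 * 3 ^ (n - 2) = 3 * (L * e) := by rw [hTdef] at hd; rw [hd, he]; ring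
      have h2 : 2 * 3 ^ (n - 2) = 3 * (2 * 3 ^ (n - 3)) := by
        have : n - 2 = (n - 3) + 1 := by omega
        rw [this, pow_succ]; ring
      rw [h2] at h1
      exact (Nat.eq_of_mul_eq_mul_left (by norm_num) h1.symm)
    have hperM : Function.IsPeriodicPt (ff n μ) (2 * 3 ^ (n - 3)) x3 := by
      rw [← hLd]
      exact (Function.isPeriodicPt_minimalPeriod _ _).mul_const e
    have hdvd : (3:ℤ) ^ n ∣ (FF (μ:ℤ))^[2 * 3 ^ (n - 3)] 3 - 3 := by
      rw [← cast_eq_iff, cast_iter]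
      exact hperM
    obtain ⟨c, hc, hc3⟩ := exactE (μ:ℤ) hm9 (n - 2) (by omega)
    have e1 : n - 2 - 1 = n - 3 := by omega
    have e2 : n - 2 + 1 = n - 1 := by omega
    rw [e1, e2] at hc
    rw [hc] at hdvd
    have h3n : (3:ℤ) ^ n = 3 ^ (n - 1) * 3 := by
      conv_lhs => rw [show n = (n - 1) + 1 by omega]
      rw [pow_succ]
    rw [h3n] at hdvd
    have : (3:ℤ) ∣ c := by
      rcases hdvd with ⟨t, ht⟩
      have h31 : (3:ℤ) ^ (n - 1) ≠ 0 := pow_ne_zero _ (by norm_num)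
      exact ⟨t, by
        have := mul_left_cancel₀ h31 (by linarith [ht] : (3:ℤ) ^ (n-1) * c = 3 ^ (n-1) * (3 * t))
        linarith⟩
    exact hc3 this

end main

end Logi

theorem logistic_maxPeriod_mu_two_five (n : ℕ) (hn : 2 ≤ n) (μ : ℕ) (hμ : 0 < μ)
    (hμ9 : μ % 9 = 2 ∨ μ % 9 = 5) :
    Finset.univ.sup
        (fun x₀ : ZMod (3 ^ n) =>
          Function.minimalPeriod
            (fun x : ZMod (3 ^ n) => (μ : ZMod (3 ^ n)) * x * (x + 1)) x₀) =
      2 * 3 ^ (n - 2) := by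
  have hm9 : (μ:ℤ) % 9 = 2 ∨ (μ:ℤ) % 9 = 5 := by
    rcases hμ9 with h | h
    · left; omega
    · right; omega
  have hm : (μ:ℤ) % 3 = 2 := by omega
  have hff : (fun x : ZMod (3 ^ n) => (μ : ZMod (3 ^ n)) * x * (x + 1)) = Logi.ff n μ := rfl
  rw [hff]
  apply le_antisymm
  · exact Finset.sup_le fun x _ => Logi.upper_bound hn hm x
  · have h := Finset.le_sup (f := fun x₀ : ZMod (3 ^ n) =>
      Function.minimalPeriod (Logi.ff n μ) x₀)
      (Finset.mem_univ (((3 : ℤ) : ZMod (3 ^ n))))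
    exact le_trans (le_of_eq (Logi.lower_exact hn hm9).symm) h
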